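/- Let k be a field, Π a presentation on a set E over k, and x ∈ k^E. If P and Q are disjoint subsets of E not meeting supp(x), then Π_x / P ∖ Q = (Π / P ∖ Q)_x as pairs of subspaces of k^{(E∖(P∪Q)) + *}. -/

import Mathlib

open Function Set

noncomputable section

variable {α k : Type*} [Field k]

/-- Axiom (O2) for a pair of families of subsets of the ground set `E`. -/
def AxO2 (E : Set α) (𝒞 𝒟 : Set (Set α)) : Prop :=
  ∀ P Q : Set α, ∀ e : α, Disjoint P Q → e ∉ P → e ∉ Q → P ∪ Q ∪ {e} = E →
    (∃ C ∈ 𝒞, e ∈ C ∧ C ⊆ P ∪ {e}) ∨ (∃ D ∈ 𝒟, e ∈ D ∧ D ⊆ Q ∪ {e})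

/-- Two vectors are orthogonal: supports intersect finitely and the sum of products is zero. -/
def Orthog (v w : α → k) : Prop :=
  (support v ∩ support w).Finite ∧ ∑ᶠ e, v e * w e = 0

/-- The subspace of `k^α` of functions supported in `E` (the formal meaning of `k^E`). -/
def FunOn (E : Set α) : Submodule k (α → k) where
  carrier := {v | support v ⊆ E}
  add_mem' hf hg := (support_add _ _).trans (union_subset hf hg)
  zero_mem' := by simp
  smul_mem' c f hf := (support_const_smul_subset c f).trans hf

/-- The set `S(V)` of supports of elements of `V`. -/
def suppSet (V : Submodule k (α → k)) : Set (Set α) := support '' (V : Set (α → k))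

/-- A presentation on the ground set `E` over `k`: a pair of orthogonal subspaces of `k^E`
whose families of supports satisfy (O2). -/
def IsPresentationOn (E : Set α) (V W : Submodule k (α → k)) : Prop :=
  V ≤ FunOn E ∧ W ≤ FunOn E ∧ (∀ v ∈ V, ∀ w ∈ W, Orthog v w) ∧
    AxO2 E (suppSet V) (suppSet W)

/-- Minimal nonempty elements of a family of sets. -/
def MinNE (𝒜 : Set (Set α)) (o : Set α) : Prop :=
  o ∈ 𝒜 ∧ o.Nonempty ∧ ∀ o' ∈ 𝒜, o'.Nonempty → o' ⊆ o → o' = o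

/-- A circuit of a matroid: a minimal dependent set. -/
def MatCircuit (M : Matroid α) (C : Set α) : Prop := Minimal M.Dep C

/-- The pair `(V, W)` presents the matroid `M` on ground set `E`. -/
def Presents (E : Set α) (V W : Submodule k (α → k)) (M : Matroid α) : Prop :=
  M.E = E ∧ (∀ C, MatCircuit M C ↔ MinNE (suppSet V) C) ∧
    (∀ D, MatCircuit M✶ D ↔ MinNE (suppSet W) D)

/-- Restriction of a vector to `X`, as a linear endomap of `k^α` (zeroing outside `X`). -/
def indLM (X : Set α) : (α → k) →ₗ[k] (α → k) where
  toFun v := X.indicator v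
  map_add' f g := by
    funext a
    by_cases h : a ∈ X <;> simp [Set.indicator_of_mem, Set.indicator_of_notMem, h]
  map_smul' c f := by
    funext a
    by_cases h : a ∈ X <;> simp [Set.indicator_of_mem, Set.indicator_of_notMem, h]

/-- Contraction `V.X` of a subspace to `X`. -/
def conV (V : Submodule k (α → k)) (X : Set α) : Submodule k (α → k) :=
  Submodule.map (indLM X) V

/-- Restriction of a pair `(V,W)` to the ground set `X`: `(V↾X, W.X)`. -/
def pairRes (Pr : Submodule k (α → k) × Submodule k (α → k)) (X : Set α) :
    Submodule k (α → k) × Submodule k (α → k) :=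
  (Pr.1 ⊓ FunOn X, conV Pr.2 X)

/-- Contraction of a pair `(V,W)` to the ground set `X`: `(V.X, W↾X)`. -/
def pairCon (Pr : Submodule k (α → k) × Submodule k (α → k)) (X : Set α) :
    Submodule k (α → k) × Submodule k (α → k) :=
  (conV Pr.1 X, Pr.2 ⊓ FunOn X)

/-- A set `I` is `Π`-independent (w.r.t. the vector subspace `V`): it includes no
nonempty support of a vector. -/
def PresIndep (V : Submodule k (α → k)) (I : Set α) : Prop :=
  ∀ v ∈ V, support v ⊆ I → v = 0

end

/-- The indicator vector `𝟙_s` of the single element `s`. -/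
noncomputable def oneAt {α k : Type*} [Field k] (s : α) : α → k := Set.indicator {s} 1

/-- The space `V_x = V + ⟨x - 𝟙_s⟩`, where `s` plays the role of the new element `*`. -/
noncomputable def Vx {α k : Type*} [Field k] (V : Submodule k (α → k)) (x : α → k) (s : α) :
    Submodule k (α → k) :=
  V ⊔ Submodule.span k {x - oneAt s}

/-- The space `W^x = {w ∈ k^{E + s} : w↾E ∈ W and w s = ∑_{e ∈ E} w e * x e}`, where the
equality includes the claim that the sum is well defined (finitely many nonzero terms). -/
noncomputable def Wx {α k : Type*} [Field k] (W : Submodule k (α → k)) (x : α → k)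
    (E : Set α) (s : α) : Submodule k (α → k) where
  carrier := {w | Function.support w ⊆ E ∪ {s} ∧ E.indicator w ∈ W ∧
    (E ∩ Function.support fun e => w e * x e).Finite ∧ w s = ∑ᶠ e ∈ E, w e * x e}
  zero_mem' := ⟨by simp, by simp, by simp, by simp⟩
  add_mem' := by
    rintro w₁ w₂ ⟨hs₁, hW₁, hf₁, he₁⟩ ⟨hs₂, hW₂, hf₂, he₂⟩
    refine ⟨(Function.support_add _ _).trans (Set.union_subset hs₁ hs₂), ?_, ?_, ?_⟩
    · have h : E.indicator (w₁ + w₂) = E.indicator w₁ + E.indicator w₂ := by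
        funext a
        by_cases h : a ∈ E <;>
          simp [Set.indicator_of_mem, Set.indicator_of_notMem, h]
      rw [h]; exact W.add_mem hW₁ hW₂
    · refine (hf₁.union hf₂).subset ?_
      rintro e ⟨heE, he⟩
      simp only [Function.mem_support, Pi.add_apply] at he
      by_cases h1 : w₁ e * x e = 0
      · exact Or.inr ⟨heE, fun h2 => he (by rw [add_mul, h1, show w₂ e * x e = 0 from h2, add_zero])⟩
      · exact Or.inl ⟨heE, h1⟩
    · have h : ∑ᶠ e ∈ E, (w₁ + w₂) e * x e
          = (∑ᶠ e ∈ E, w₁ e * x e) + ∑ᶠ e ∈ E, w₂ e * x e := by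
        rw [← finsum_mem_add_distrib' hf₁ hf₂]
        exact finsum_mem_congr rfl fun e _ => by simp [add_mul]
      rw [Pi.add_apply, he₁, he₂, h]
  smul_mem' := by
    rintro c w ⟨hs, hW, hf, he⟩
    refine ⟨(support_const_smul_subset c w).trans hs, ?_, ?_, ?_⟩
    · have h : E.indicator (c • w) = c • E.indicator w := by
        funext a
        by_cases h : a ∈ E <;>
          simp [Set.indicator_of_mem, Set.indicator_of_notMem, h]
      rw [h]; exact W.smul_mem c hW
    · refine hf.subset ?_
      rintro e ⟨heE, he⟩
      refine ⟨heE, fun h0 => ?_⟩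
      simp only [Function.mem_support, Pi.smul_apply, smul_eq_mul] at he
      exact he (by rw [mul_assoc, show w e * x e = 0 from h0, mul_zero])
    · have hsupp : Function.support (E.indicator fun e => w e * x e)
          = E ∩ Function.support fun e => w e * x e := Set.support_indicator
      have h : ∑ᶠ e ∈ E, (c • w) e * x e = c * ∑ᶠ e ∈ E, w e * x e := by
        calc ∑ᶠ e ∈ E, (c • w) e * x e
            = ∑ᶠ e ∈ E, c * (w e * x e) :=
              finsum_mem_congr rfl fun e _ => by simp [mul_assoc]
          _ = ∑ᶠ e, E.indicator (fun e => c * (w e * x e)) e := finsum_mem_def _ _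
          _ = ∑ᶠ e, c * E.indicator (fun e => w e * x e) e := by
              refine finsum_congr fun e => ?_
              by_cases h : e ∈ E <;>
                simp [Set.indicator_of_mem, Set.indicator_of_notMem, h]
          _ = c * ∑ᶠ e, E.indicator (fun e => w e * x e) e :=
              (mul_finsum' _ c (by unfold Function.HasFiniteSupport; rw [hsupp]; exact hf)).symm
          _ = c * ∑ᶠ e ∈ E, w e * x e := by rw [← finsum_mem_def]
      rw [Pi.smul_apply, smul_eq_mul, he, h]

section AuxLemmas
variable {α k : Type*} [Field k]

lemma mem_conV' {V : Submodule k (α → k)} {X : Set α} {v : α → k} :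
    v ∈ conV V X ↔ ∃ u ∈ V, X.indicator u = v := by
  constructor
  · rintro ⟨u, hu, rfl⟩; exact ⟨u, hu, rfl⟩
  · rintro ⟨u, hu, rfl⟩; exact ⟨u, hu, rfl⟩

lemma mem_Vx' {V : Submodule k (α → k)} {x : α → k} {s : α} {v : α → k} :
    v ∈ Vx V x s ↔ ∃ u ∈ V, ∃ c : k, v = u + c • (x - oneAt s) := by
  rw [Vx, Submodule.mem_sup]
  constructor
  · rintro ⟨u, hu, y, hy, rfl⟩
    obtain ⟨c, rfl⟩ := Submodule.mem_span_singleton.1 hy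
    exact ⟨u, hu, c, rfl⟩
  · rintro ⟨u, hu, c, rfl⟩
    exact ⟨u, hu, c • (x - oneAt s),
      Submodule.smul_mem _ _ (Submodule.mem_span_singleton_self _), rfl⟩

lemma mem_Wx' {W : Submodule k (α → k)} {x : α → k} {E : Set α} {s : α} {w : α → k} :
    w ∈ Wx W x E s ↔ Function.support w ⊆ E ∪ {s} ∧ E.indicator w ∈ W ∧
      (E ∩ Function.support fun e => w e * x e).Finite ∧ w s = ∑ᶠ e ∈ E, w e * x e :=
  Iff.rfl

end AuxLemmas

/-- If `P` and `Q` are disjoint subsets of `E` not meeting the support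
of `x`, then `Π_x / P \ Q = (Π / P \ Q)_x` as pairs of subspaces of `k^{(E ∖ (P ∪ Q)) + *}`.
Here, for a pair `Pr` with ground set `G`, `Pr / P ∖ Q = ((Pr.(G∖P))↾(G∖(P∪Q)))`, and `s`
plays the role of the new element `*`. -/
theorem Vx_Wx_minor_commute {α k : Type*} [Field k]
    (E : Set α) (V W : Submodule k (α → k)) (h : IsPresentationOn E V W)
    (x : α → k) (hxE : Function.support x ⊆ E) (s : α) (hs : s ∉ E)
    (P Q : Set α) (hP : P ⊆ E) (hQ : Q ⊆ E) (hPQ : Disjoint P Q)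
    (hPx : Disjoint P (Function.support x)) (hQx : Disjoint Q (Function.support x)) :
    pairRes (pairCon (Vx V x s, Wx W x E s) ((E ∪ {s}) \ P)) ((E ∪ {s}) \ (P ∪ Q))
      = (Vx (pairRes (pairCon (V, W) (E \ P)) (E \ (P ∪ Q))).1 x s,
         Wx (pairRes (pairCon (V, W) (E \ P)) (E \ (P ∪ Q))).2 x (E \ (P ∪ Q)) s) := by
  classical
  have hVE : V ≤ FunOn E := h.1
  have hWE : W ≤ FunOn E := h.2.1
  have hsP : s ∉ P := fun h' => hs (hP h')
  have hsQ : s ∉ Q := fun h' => hs (hQ h')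
  have hxP : ∀ a ∈ P, x a = 0 := fun a ha =>
    Function.notMem_support.1 (Set.disjoint_left.1 hPx ha)
  have hxQ : ∀ a ∈ Q, x a = 0 := fun a ha =>
    Function.notMem_support.1 (Set.disjoint_left.1 hQx ha)
  have hxmem : ∀ a : α, x a ≠ 0 → a ∈ E \ (P ∪ Q) := by
    intro a ha
    refine ⟨hxE ha, ?_⟩
    rintro (hp | hq)
    · exact ha (hxP a hp)
    · exact ha (hxQ a hq)
  have honeAt : ∀ a : α, a ≠ s → oneAt (k := k) s a = 0 := fun a ha =>
    Set.indicator_of_notMem (by simpa using ha) _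
  have honeAts : oneAt (k := k) s s = 1 := by simp [oneAt]
  have hset1 : (E ∪ {s}) \ P = (E \ P) ∪ {s} := by
    ext a
    by_cases has : a = s
    · subst has; simp [hsP, hs]
    · simp only [Set.mem_diff, Set.mem_union, Set.mem_singleton_iff, has, or_false]
  have hset2 : (E ∪ {s}) \ (P ∪ Q) = (E \ (P ∪ Q)) ∪ {s} := by
    ext a
    by_cases has : a = s
    · subst has; simp [hsP, hsQ, hs]
    · simp only [Set.mem_diff, Set.mem_union, Set.mem_singleton_iff, has, or_false]
  have key : ∀ v' ∈ V, ∀ c : k, ((E ∪ {s}) \ P).indicator (v' + c • (x - oneAt s))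
      = (E \ P).indicator v' + c • (x - oneAt s) := by
    intro v' hv' c
    have hv'E : Function.support v' ⊆ E := hVE hv'
    funext a
    by_cases haP : a ∈ P
    · have haE : a ∈ E := hP haP
      have hans : a ≠ s := fun h' => hs (h' ▸ haE)
      rw [Set.indicator_of_notMem (fun hmem => hmem.2 haP),
        Pi.add_apply, Set.indicator_of_notMem (fun hmem => hmem.2 haP)]
      simp [hxP a haP, honeAt a hans]
    · by_cases haE : a ∈ E
      · have hm1 : a ∈ (E ∪ {s}) \ P := ⟨Or.inl haE, haP⟩
        have hm2 : a ∈ E \ P := ⟨haE, haP⟩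
        rw [Set.indicator_of_mem hm1, Pi.add_apply, Pi.add_apply,
          Set.indicator_of_mem hm2]
      · by_cases has : a = s
        · have hm1 : a ∈ (E ∪ {s}) \ P := ⟨Or.inr has, haP⟩
          rw [Set.indicator_of_mem hm1, Pi.add_apply, Pi.add_apply,
            Set.indicator_of_notMem (fun hmem => haE hmem.1)]
          have hv0 : v' a = 0 := Function.notMem_support.1 fun hsup => haE (hv'E hsup)
          simp [hv0]
        · rw [Set.indicator_of_notMem (fun hmem => has (hmem.1.resolve_left haE)),
            Pi.add_apply, Set.indicator_of_notMem (fun hmem => haE hmem.1)]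
          have hxa : x a = 0 := by by_contra h0; exact haE (hxE h0)
          have hv0 : v' a = 0 := Function.notMem_support.1 fun hsup => haE (hv'E hsup)
          simp [hxa, hv0, honeAt a has]
  have hsum_eq : ∀ w₀ : α → k, Function.support w₀ ⊆ (E \ P) ∪ {s} →
      (∑ᶠ e ∈ E, w₀ e * x e) = ∑ᶠ e ∈ E \ (P ∪ Q), w₀ e * x e := by
    intro w₀ hw₀
    refine finsum_mem_inter_support_eq _ _ _ ?_
    ext a
    simp only [Set.mem_inter_iff, Function.mem_support, Set.mem_diff]
    constructor
    · rintro ⟨haE, hne⟩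
      have hw0 : w₀ a ≠ 0 := fun h0 => hne (by rw [h0, zero_mul])
      have hxa : x a ≠ 0 := fun h0 => hne (by rw [h0, mul_zero])
      exact ⟨⟨haE, (hxmem a hxa).2⟩, hne⟩
    · rintro ⟨⟨haE, _⟩, hne⟩
      exact ⟨haE, hne⟩
  simp only [pairRes, pairCon]
  refine Prod.ext ?_ ?_
  · show conV (Vx V x s) ((E ∪ {s}) \ P) ⊓ FunOn ((E ∪ {s}) \ (P ∪ Q))
      = Vx (conV V (E \ P) ⊓ FunOn (E \ (P ∪ Q))) x s
    ext v
    rw [Submodule.mem_inf, mem_Vx']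
    constructor
    · rintro ⟨hv1, hv2⟩
      obtain ⟨u, huVx, rfl⟩ := mem_conV'.1 hv1
      obtain ⟨v', hv', c, rfl⟩ := mem_Vx'.1 huVx
      rw [key v' hv' c] at hv2 ⊢
      have hsub2 : Function.support ((E \ P).indicator v' + c • (x - oneAt s))
          ⊆ (E ∪ {s}) \ (P ∪ Q) := hv2
      refine ⟨(E \ P).indicator v', ⟨mem_conV'.2 ⟨v', hv', rfl⟩, ?_⟩, c, rfl⟩
      intro a ha
      have haEP : a ∈ (E \ P) ∩ Function.support v' := by
        rwa [← Set.support_indicator]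
      refine ⟨haEP.1.1, ?_⟩
      rintro (hp | hq)
      · exact haEP.1.2 hp
      · have hane : a ≠ s := fun h' => hsQ (h' ▸ hq)
        have hva : (((E \ P).indicator v' + c • (x - oneAt s) : α → k)) a
            = (E \ P).indicator v' a := by
          simp [hxQ a hq, honeAt a hane]
        have hmem : a ∈ Function.support ((E \ P).indicator v' + c • (x - oneAt s)) :=
          Function.mem_support.2 (by rw [hva]; exact Function.mem_support.1 ha)
        exact (hsub2 hmem).2 (Or.inr hq)
    · rintro ⟨u, ⟨hu1, hu2⟩, c, rfl⟩
      obtain ⟨v', hv', rfl⟩ := mem_conV'.1 hu1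
      have hsub2 : Function.support ((E \ P).indicator v') ⊆ E \ (P ∪ Q) := hu2
      constructor
      · exact mem_conV'.2 ⟨v' + c • (x - oneAt s), mem_Vx'.2 ⟨v', hv', c, rfl⟩, key v' hv' c⟩
      · show Function.support _ ⊆ (E ∪ {s}) \ (P ∪ Q)
        intro a ha
        rw [hset2]
        by_cases has : a = s
        · exact Or.inr has
        · left
          by_cases hu0 : (E \ P).indicator v' a = 0
          · have hxa : x a ≠ 0 := by
              intro h0
              have : (((E \ P).indicator v' + c • (x - oneAt s) : α → k)) a = 0 := by
                simp [hu0, h0, honeAt a has]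
              exact Function.mem_support.1 ha this
            exact hxmem a hxa
          · exact hsub2 (Function.mem_support.2 hu0)
  · show conV (Wx W x E s ⊓ FunOn ((E ∪ {s}) \ P)) ((E ∪ {s}) \ (P ∪ Q))
      = Wx (conV (W ⊓ FunOn (E \ P)) (E \ (P ∪ Q))) x (E \ (P ∪ Q)) s
    have hX2 : E \ (P ∪ Q) ⊆ (E ∪ {s}) \ (P ∪ Q) := by
      rw [hset2]; exact Set.subset_union_left
    have hsX2 : s ∈ (E ∪ {s}) \ (P ∪ Q) :=
      ⟨Or.inr rfl, by rintro (h' | h'); exacts [hsP h', hsQ h']⟩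
    ext v
    constructor
    · intro hv
      obtain ⟨w, hw, rfl⟩ := mem_conV'.1 hv
      obtain ⟨hwWx, hw1⟩ := Submodule.mem_inf.1 hw
      obtain ⟨hws, hwW, hwfin, hwsum⟩ := mem_Wx'.1 hwWx
      have hw1' : Function.support w ⊆ (E \ P) ∪ {s} := by
        rw [← hset1]; exact hw1
      have hagree : ∀ a ∈ E \ (P ∪ Q), ((E ∪ {s}) \ (P ∪ Q)).indicator w a = w a :=
        fun a ha => Set.indicator_of_mem (hX2 ha) _
      refine mem_Wx'.2 ⟨?_, ?_, ?_, ?_⟩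
      · rw [← hset2]
        intro a ha
        rw [Set.support_indicator] at ha
        exact ha.1
      · refine mem_conV'.2 ⟨E.indicator w, Submodule.mem_inf.2 ⟨hwW, ?_⟩, ?_⟩
        · intro a ha
          rw [Set.support_indicator] at ha
          rcases hw1' ha.2 with h' | h'
          · exact h'
          · exact absurd (h' ▸ ha.1) hs
        · funext a
          by_cases haE' : a ∈ E \ (P ∪ Q)
          · rw [Set.indicator_of_mem haE', Set.indicator_of_mem haE',
              Set.indicator_of_mem haE'.1, hagree a haE']
          · rw [Set.indicator_of_notMem haE', Set.indicator_of_notMem haE']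
      · refine hwfin.subset ?_
        rintro a ⟨ha1, ha2⟩
        refine ⟨ha1.1, ?_⟩
        simp only [Function.mem_support] at ha2 ⊢
        rwa [hagree a ha1] at ha2
      · rw [Set.indicator_of_mem hsX2, hwsum, hsum_eq w hw1']
        exact finsum_mem_congr rfl fun a ha => by rw [hagree a ha]
    · intro hv
      obtain ⟨hvs, hvW', hvfin, hvsum⟩ := mem_Wx'.1 hv
      obtain ⟨w₀, hw₀m, hind⟩ := mem_conV'.1 hvW'
      obtain ⟨hw₀W, hw₀s⟩ := Submodule.mem_inf.1 hw₀m
      have hw₀supp : Function.support w₀ ⊆ E \ P := hw₀s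
      have hvw : ∀ a ∈ E \ (P ∪ Q), w₀ a = v a := by
        intro a ha
        have := congrFun hind a
        rwa [Set.indicator_of_mem ha, Set.indicator_of_mem ha] at this
      have hw0s : w₀ s = 0 := Function.notMem_support.1 fun h' => hs (hw₀supp h').1
      have hwa : ∀ a : α, a ≠ s → ((w₀ + v s • oneAt s : α → k)) a = w₀ a := by
        intro a ha; simp [honeAt a ha]
      have hwse : ((w₀ + v s • oneAt s : α → k)) s = v s := by
        simp [hw0s, honeAts]
      have hwsupp : Function.support ((w₀ + v s • oneAt s : α → k)) ⊆ (E \ P) ∪ {s} := by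
        intro a ha
        by_cases has : a = s
        · exact Or.inr has
        · left
          apply hw₀supp
          rw [Function.mem_support, ← hwa a has]
          exact ha
      have hEsum : ∑ᶠ e ∈ E, w₀ e * x e = ∑ᶠ e ∈ E \ (P ∪ Q), v e * x e := by
        rw [hsum_eq w₀ (hw₀supp.trans Set.subset_union_left)]
        exact finsum_mem_congr rfl fun a ha => by rw [hvw a ha]
      refine ⟨w₀ + v s • oneAt s, Submodule.mem_inf.2 ⟨mem_Wx'.2 ⟨?_, ?_, ?_, ?_⟩, ?_⟩, ?_⟩
      · exact hwsupp.trans (Set.union_subset_union Set.diff_subset (subset_refl _))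
      · have heq : E.indicator ((w₀ + v s • oneAt s : α → k)) = w₀ := by
          funext a
          by_cases haE : a ∈ E
          · have has : a ≠ s := fun h' => hs (h' ▸ haE)
            rw [Set.indicator_of_mem haE, hwa a has]
          · rw [Set.indicator_of_notMem haE]
            exact (Function.notMem_support.1 fun h' => haE (hw₀supp h').1).symm
        rw [heq]; exact hw₀W
      · refine hvfin.subset ?_
        rintro a ⟨haE, ha2⟩
        have has : a ≠ s := fun h' => hs (h' ▸ haE)
        simp only [Function.mem_support] at ha2 ⊢
        rw [hwa a has] at ha2
        have hxne : x a ≠ 0 := fun h0 => ha2 (by rw [h0, mul_zero])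
        have haE' : a ∈ E \ (P ∪ Q) := ⟨haE, (hxmem a hxne).2⟩
        refine ⟨haE', ?_⟩
        simp only [Function.mem_support]
        rwa [← hvw a haE']
      · rw [hwse]
        have heq : ∑ᶠ e ∈ E, ((w₀ + v s • oneAt s : α → k)) e * x e
            = ∑ᶠ e ∈ E, w₀ e * x e :=
          finsum_mem_congr rfl fun a ha => by rw [hwa a (fun h' => hs (h' ▸ ha))]
        rw [heq, hEsum]
        exact hvsum
      · show Function.support _ ⊆ (E ∪ {s}) \ P
        rw [hset1]
        exact hwsupp
      · show ((E ∪ {s}) \ (P ∪ Q)).indicator (w₀ + v s • oneAt s) = v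
        funext a
        by_cases has : a = s
        · have hmem : a ∈ (E ∪ {s}) \ (P ∪ Q) := by rw [hset2]; exact Or.inr has
          rw [Set.indicator_of_mem hmem, has]
          exact hwse
        · by_cases haE' : a ∈ E \ (P ∪ Q)
          · rw [Set.indicator_of_mem (hX2 haE'), hwa a has, hvw a haE']
          · have hmem : a ∉ (E ∪ {s}) \ (P ∪ Q) := by
              rw [hset2]; rintro (h' | h'); exacts [haE' h', has h']
            rw [Set.indicator_of_notMem hmem]
            exact (Function.notMem_support.1 fun h' =>
              (hvs h').elim (fun h'' => haE' h'') (fun h'' => has h'')).symm
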